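/- Let L be a finite lattice and K a field such that the join-meet ideal I_L ⊆ K[L] is a radical ideal. Then I_L equals the intersection, over all admissible subsets A ⊆ L, of the prime ideals P_A(L) = (I_{L_A} : ∏_{a∉A} X_a) + (X_a : a ∈ A). -/

import Mathlib

open MvPolynomial

/-- The join-meet ideal of a finite lattice `L`: the ideal of `K[L]` generated by the
basic binomials `X a * X b - X (a ⊓ b) * X (a ⊔ b)` for incomparable `a, b ∈ L`. -/
noncomputable def joinMeetIdeal (K : Type*) [Field K] (L : Type*) [Lattice L] :
    Ideal (MvPolynomial L K) :=
  Ideal.span {f | ∃ a b : L, ¬ a ≤ b ∧ ¬ b ≤ a ∧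
    f = X a * X b - X (a ⊓ b) * X (a ⊔ b)}

/-- A subset `A` of a lattice is admissible if for every incomparable pair `a, b`,
`A` contains `a` or `b` iff `A` contains `a ⊓ b` or `a ⊔ b`. -/
def Admissible {L : Type*} [Lattice L] (A : Set L) : Prop :=
  ∀ a b : L, ¬ a ≤ b → ¬ b ≤ a → ((a ∈ A ∨ b ∈ A) ↔ (a ⊓ b ∈ A ∨ a ⊔ b ∈ A))

/-- The ideal `I_{L_A}` of `K[L]` generated by the basic binomials of the incomparable pairs
of elements of `L ∖ A`. -/
noncomputable def sublatticeJoinMeetIdeal (K : Type*) [Field K] (L : Type*) [Lattice L]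
    (A : Set L) : Ideal (MvPolynomial L K) :=
  Ideal.span {f | ∃ a b : L, a ∉ A ∧ b ∉ A ∧ ¬ a ≤ b ∧ ¬ b ≤ a ∧
    f = X a * X b - X (a ⊓ b) * X (a ⊔ b)}

open scoped Classical in
/-- The prime ideal `P_A(L) = (I_{L_A} : ∏_{a ∉ A} X a) + (X a : a ∈ A)`. -/
noncomputable def PA (K : Type*) [Field K] (L : Type*) [Lattice L] [Fintype L]
    (A : Set L) : Ideal (MvPolynomial L K) :=
  Submodule.colon (sublatticeJoinMeetIdeal K L A)
      ((Ideal.span {∏ a ∈ Finset.univ.filter (fun a : L => a ∉ A), X a} :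
        Ideal (MvPolynomial L K)) : Set (MvPolynomial L K)) ⊔
    Ideal.span {f | ∃ a ∈ A, f = (X a : MvPolynomial L K)}

lemma sublattice_le_joinMeetIdeal (K : Type*) [Field K] {L : Type*} [Lattice L]
    (A : Set L) : sublatticeJoinMeetIdeal K L A ≤ joinMeetIdeal K L := by
  apply Ideal.span_mono
  rintro f ⟨a, b, _, _, hab, hba, rfl⟩
  exact ⟨a, b, hab, hba, rfl⟩

/-- **Theorem.** If the join-meet ideal `I_L` of a finite lattice is radical, then `I_L` is the
intersection of the ideals `P_A(L)` over all admissible subsets `A ⊆ L`. -/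
theorem joinMeetIdeal_eq_iInf_PA
    {L : Type*} [Lattice L] [Fintype L] (K : Type*) [Field K]
    (hrad : (joinMeetIdeal K L).IsRadical) :
    joinMeetIdeal K L = ⨅ A ∈ {A : Set L | Admissible A}, PA K L A := by
  classical
  apply le_antisymm
  · -- I_L ≤ ⨅
    refine le_iInf fun A => le_iInf fun hA => ?_
    rw [joinMeetIdeal, Ideal.span_le]
    rintro f ⟨a, b, hab, hba, rfl⟩
    by_cases h : a ∈ A ∨ b ∈ A
    · -- use the `span {X a : a ∈ A}` part
      apply Ideal.mem_sup_right
      have h2 := (hA a b hab hba).mp h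
      have hm1 : (X a * X b : MvPolynomial L K) ∈
          Ideal.span {f | ∃ a ∈ A, f = (X a : MvPolynomial L K)} := by
        rcases h with h | h
        · exact Ideal.mul_mem_right _ _ (Ideal.subset_span ⟨a, h, rfl⟩)
        · exact Ideal.mul_mem_left _ _ (Ideal.subset_span ⟨b, h, rfl⟩)
      have hm2 : (X (a ⊓ b) * X (a ⊔ b) : MvPolynomial L K) ∈
          Ideal.span {f | ∃ a ∈ A, f = (X a : MvPolynomial L K)} := by
        rcases h2 with h2 | h2
        · exact Ideal.mul_mem_right _ _ (Ideal.subset_span ⟨a ⊓ b, h2, rfl⟩)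
        · exact Ideal.mul_mem_left _ _ (Ideal.subset_span ⟨a ⊔ b, h2, rfl⟩)
      exact Ideal.sub_mem _ hm1 hm2
    · -- use the colon part
      push_neg at h
      apply Ideal.mem_sup_left
      rw [Submodule.mem_colon]
      intro p hp
      rw [smul_eq_mul]
      exact Ideal.mul_mem_right _ _
        (Ideal.subset_span ⟨a, b, h.1, h.2, hab, hba, rfl⟩)
  · -- ⨅ ≤ I_L
    intro x hx
    rw [← hrad.radical, Ideal.radical_eq_sInf, Ideal.mem_sInf]
    rintro J ⟨hle, hJ⟩
    set A : Set L := {a | X a ∈ J} with hAdef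
    have hAadm : Admissible A := by
      intro a b hab hba
      have hgen : (X a * X b - X (a ⊓ b) * X (a ⊔ b) : MvPolynomial L K) ∈ J :=
        hle (Ideal.subset_span ⟨a, b, hab, hba, rfl⟩)
      have hiff : (X a * X b : MvPolynomial L K) ∈ J ↔
          (X (a ⊓ b) * X (a ⊔ b) : MvPolynomial L K) ∈ J := by
        constructor
        · intro h1
          have := J.sub_mem h1 hgen
          simpa using this
        · intro h1
          have := J.add_mem hgen h1
          simpa using this
      have h1 : (X a * X b : MvPolynomial L K) ∈ J ↔ (a ∈ A ∨ b ∈ A) :=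
        ⟨fun h => hJ.mem_or_mem h, fun h => h.elim
          (fun h => Ideal.mul_mem_right _ _ h) (fun h => Ideal.mul_mem_left _ _ h)⟩
      have h2 : (X (a ⊓ b) * X (a ⊔ b) : MvPolynomial L K) ∈ J ↔ (a ⊓ b ∈ A ∨ a ⊔ b ∈ A) :=
        ⟨fun h => hJ.mem_or_mem h, fun h => h.elim
          (fun h => Ideal.mul_mem_right _ _ h) (fun h => Ideal.mul_mem_left _ _ h)⟩
      rw [← h1, ← h2]
      exact hiff
    have hxA : x ∈ PA K L A := by
      have := Ideal.mem_iInf.mp hx A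
      exact Ideal.mem_iInf.mp this hAadm
    -- show PA K L A ≤ J
    refine (?_ : PA K L A ≤ J) hxA
    unfold PA
    apply sup_le
    · -- colon part
      intro g hg
      rw [Submodule.mem_colon] at hg
      set m : MvPolynomial L K := ∏ a ∈ Finset.univ.filter (fun a : L => a ∉ A), X a with hm
      have hgm : g * m ∈ J := by
        have h1 : g • m ∈ sublatticeJoinMeetIdeal K L A :=
          hg m (Ideal.subset_span rfl)
        rw [smul_eq_mul] at h1
        exact hle (sublattice_le_joinMeetIdeal K A h1)
      have hmJ : m ∉ J := by
        intro hmem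
        rw [hm, Ideal.IsPrime.prod_mem_iff] at hmem
        obtain ⟨a, ha, haJ⟩ := hmem
        simp only [Finset.mem_filter] at ha
        exact ha.2 haJ
      rcases hJ.mem_or_mem hgm with h | h
      · exact h
      · exact absurd h hmJ
    · -- variables part
      rw [Ideal.span_le]
      rintro f ⟨a, ha, rfl⟩
      exact ha
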